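/- (Descent property of the MM iteration for the KL cost.) Let k ≥ 1, B ∈ ℂ^{k×p}, w ∈ ℂ^p, and let M ∈ ℂ^{k×k} be Hermitian with largest eigenvalue λ. Define the cost f(w̄) = 2·Re(w̄ᴴ B w) + Re(w̄ᴴ M w̄) for w̄ ∈ ℂ^k. Let w̄⁰ ∈ 𝕋_k and set u = −B w + (λ·I − M) w̄⁰. If every entry of u is nonzero, then the MM update w̄⁺ := Φ_𝕋(u) lies in 𝕋_k and satisfies f(w̄⁺) ≤ f(w̄⁰). -/

import Mathlib

open Matrix

open ComplexOrder in
/-- Auxiliary: `λ·I − M` is positive semidefinite (in the real-part sense) when `λ`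
is the largest eigenvalue of the Hermitian matrix `M`, and it is Hermitian. -/
lemma mm_descent_kl_aux {k : ℕ} (M : Matrix (Fin k) (Fin k) ℂ) (hM : M.IsHermitian)
    (lam : ℝ) (hlam : IsGreatest (Set.range hM.eigenvalues) lam) :
    (((lam : ℂ) • 1 - M)ᴴ = (lam : ℂ) • 1 - M) ∧
      ∀ x : Fin k → ℂ, 0 ≤ (star x ⬝ᵥ ((lam : ℂ) • 1 - M) *ᵥ x).re := by
  have hpsd : ((lam : ℂ) • 1 - M).PosSemidef := by
    have hU := (Matrix.mem_unitaryGroup_iff).mp (hM.eigenvectorUnitary).2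
    set U : Matrix (Fin k) (Fin k) ℂ := (hM.eigenvectorUnitary : Matrix (Fin k) (Fin k) ℂ)
    have hQ : (lam : ℂ) • 1 - M
        = U * diagonal (fun i => ((lam - hM.eigenvalues i : ℝ) : ℂ)) * Uᴴ := by
      have h1 : ((lam : ℂ) • 1 : Matrix (Fin k) (Fin k) ℂ)
          = U * ((lam : ℂ) • 1) * Uᴴ := by
        rw [Matrix.mul_smul, mul_one, Matrix.smul_mul]
        rw [show U * Uᴴ = 1 from hU]
      have h2 : M = U * diagonal (RCLike.ofReal ∘ hM.eigenvalues) * Uᴴ := hM.spectral_theorem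
      conv_lhs => rw [h1, h2]
      rw [← Matrix.sub_mul, ← Matrix.mul_sub]
      congr 2
      rw [show ((lam : ℂ) • 1 : Matrix (Fin k) (Fin k) ℂ) = diagonal (fun _ => (lam : ℂ)) by
        rw [smul_eq_diagonal_mul, mul_one], diagonal_sub]
      congr 1
      funext i
      simp [Complex.ofReal_sub]
    rw [hQ]
    exact (Matrix.PosSemidef.diagonal (fun i => by
      have hle := hlam.2 ⟨i, rfl⟩
      simp only [Pi.zero_apply]
      rw [Complex.le_def]
      refine ⟨by simpa using sub_nonneg.mpr hle, by simp⟩)).mul_mul_conjTranspose_same U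
  refine ⟨hpsd.1, fun x => ?_⟩
  have := (Complex.le_def.mp (hpsd.dotProduct_mulVec_nonneg x)).1
  simpa using this

/-- Descent property of the MM iteration for the KL cost
`f(w̄) = 2·Re(w̄ᴴ B w) + Re(w̄ᴴ M w̄)`: with `u = −B w + (λ·I − M) w̄⁰` having all
entries nonzero, the MM update `w̄⁺ = Φ_𝕋(u)` lies on the torus and satisfies
`f(w̄⁺) ≤ f(w̄⁰)`. -/
theorem mm_descent_kl {p k : ℕ} (hk : 1 ≤ k)
    (B : Matrix (Fin k) (Fin p) ℂ) (w : Fin p → ℂ)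
    (M : Matrix (Fin k) (Fin k) ℂ) (hM : M.IsHermitian)
    (lam : ℝ) (hlam : IsGreatest (Set.range hM.eigenvalues) lam)
    (f : (Fin k → ℂ) → ℝ)
    (hf : ∀ wb, f wb =
      2 * (star wb ⬝ᵥ B *ᵥ w).re + (star wb ⬝ᵥ M *ᵥ wb).re)
    (wb0 : Fin k → ℂ) (hwb0 : ∀ i, ‖wb0 i‖ = 1)
    (u : Fin k → ℂ)
    (hu : u = -(B *ᵥ w) + ((lam : ℂ) • 1 - M) *ᵥ wb0)
    (hu0 : ∀ i, u i ≠ 0)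
    (wbplus : Fin k → ℂ)
    (hwbplus : ∀ i, wbplus i = u i / ((‖u i‖ : ℝ) : ℂ)) :
    (∀ i, ‖wbplus i‖ = 1) ∧ f wbplus ≤ f wb0 := by
  -- the new iterate is on the torus
  have habs : ∀ i, ‖wbplus i‖ = 1 := by
    intro i
    have h : ‖u i‖ ≠ 0 := by simpa using hu0 i
    rw [hwbplus i, norm_div, Complex.norm_real, Real.norm_eq_abs,
      _root_.abs_of_nonneg (norm_nonneg (u i)), div_self h]
  refine ⟨habs, ?_⟩
  set Q : Matrix (Fin k) (Fin k) ℂ := (lam : ℂ) • 1 - M with hQdef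
  obtain ⟨hQH, hQnn⟩ := mm_descent_kl_aux M hM lam hlam
  -- symmetry of the real part of the quadratic form
  have hsym : ∀ a b : Fin k → ℂ, (star a ⬝ᵥ Q *ᵥ b).re = (star b ⬝ᵥ Q *ᵥ a).re := by
    intro a b
    have : star a ⬝ᵥ Q *ᵥ b = star (star b ⬝ᵥ Q *ᵥ a) := by
      rw [star_dotProduct, star_mulVec, hQH, ← Matrix.dotProduct_mulVec]
    rw [this, Complex.star_def, Complex.conj_re]
  -- key quadratic inequality from positive semidefiniteness
  have hquad : ∀ a b : Fin k → ℂ,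
      2 * (star a ⬝ᵥ Q *ᵥ b).re ≤ (star a ⬝ᵥ Q *ᵥ a).re + (star b ⬝ᵥ Q *ᵥ b).re := by
    intro a b
    have h0 : 0 ≤ (star (a - b) ⬝ᵥ Q *ᵥ (a - b)).re := hQnn (a - b)
    have hexp : star (a - b) ⬝ᵥ Q *ᵥ (a - b)
        = star a ⬝ᵥ Q *ᵥ a - star a ⬝ᵥ Q *ᵥ b - star b ⬝ᵥ Q *ᵥ a + star b ⬝ᵥ Q *ᵥ b := by
      rw [star_sub, Matrix.mulVec_sub, sub_dotProduct, dotProduct_sub, dotProduct_sub]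
      ring
    rw [hexp] at h0
    simp only [Complex.add_re, Complex.sub_re] at h0
    have := hsym a b
    linarith
  -- quadratic form of `(lam : ℂ) • 1` on the torus
  have htorus : ∀ z : Fin k → ℂ, (∀ i, ‖z i‖ = 1) →
      (star z ⬝ᵥ ((lam : ℂ) • 1 : Matrix (Fin k) (Fin k) ℂ) *ᵥ z).re = lam * k := by
    intro z hz
    rw [Matrix.smul_mulVec, Matrix.one_mulVec, dotProduct_smul]
    have : star z ⬝ᵥ z = (k : ℂ) := by
      simp only [dotProduct, Pi.star_apply, Complex.star_def]
      have h1 : ∀ i, (starRingEnd ℂ) (z i) * z i = 1 := by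
        intro i
        rw [mul_comm, Complex.mul_conj, Complex.normSq_eq_norm_sq, hz i]
        simp
      rw [Finset.sum_congr rfl (fun i _ => h1 i)]
      simp
    rw [this]
    simp
  -- decomposition of the M-quadratic form
  have hMform : ∀ z : Fin k → ℂ, (∀ i, ‖z i‖ = 1) →
      (star z ⬝ᵥ M *ᵥ z).re = lam * k - (star z ⬝ᵥ Q *ᵥ z).re := by
    intro z hz
    have hMQ : M = (lam : ℂ) • 1 - Q := by rw [hQdef, sub_sub_cancel]
    rw [hMQ, Matrix.sub_mulVec, dotProduct_sub, Complex.sub_re, htorus z hz]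
  -- linear form with u
  have hulin : ∀ a : Fin k → ℂ,
      (star a ⬝ᵥ u).re = -(star a ⬝ᵥ B *ᵥ w).re + (star a ⬝ᵥ Q *ᵥ wb0).re := by
    intro a
    rw [hu, dotProduct_add, dotProduct_neg]
    simp [hQdef]
  -- the update maximizes the linear form
  have hxu : (star wbplus ⬝ᵥ u).re = ∑ i, ‖u i‖ := by
    simp only [dotProduct, Pi.star_apply, Complex.re_sum]
    apply Finset.sum_congr rfl
    intro i _
    have h : ((‖u i‖ : ℝ) : ℂ) ≠ 0 := by simpa using hu0 i
    rw [Complex.star_def, hwbplus i, map_div₀, Complex.conj_ofReal, div_mul_eq_mul_div,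
      mul_comm, Complex.mul_conj, Complex.normSq_eq_norm_sq, Complex.ofReal_pow, sq,
      mul_div_assoc, div_self h, mul_one, Complex.ofReal_re]
  have hyu : (star wb0 ⬝ᵥ u).re ≤ ∑ i, ‖u i‖ := by
    simp only [dotProduct, Pi.star_apply, Complex.re_sum]
    apply Finset.sum_le_sum
    intro i _
    calc ((star (wb0 i)) * u i).re ≤ ‖(star (wb0 i)) * u i‖ := Complex.re_le_norm _
      _ = ‖u i‖ := by
          rw [Complex.star_def, norm_mul, Complex.norm_conj, hwb0 i, one_mul]
  -- putting it all together
  rw [hf wbplus, hf wb0, hMform wbplus habs, hMform wb0 hwb0]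
  have h1 := hquad wbplus wb0
  have h2 := hulin wbplus
  have h3 := hulin wb0
  have h4 : (star wb0 ⬝ᵥ u).re ≤ (star wbplus ⬝ᵥ u).re := by rw [hxu]; exact hyu
  linarith
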